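/- Let n ≥ 1. The group of pseudo-unitary matrices of the form 𝕁 acts transitively on n-dimensional isotropic subspaces: for any two complex subspaces V and V' of ℂ^(2n+1), each of complex dimension n and each 𝕁-isotropic, there exists a matrix g ∈ Matrix (Fin n ⊕ Fin 1 ⊕ Fin n) (Fin n ⊕ Fin 1 ⊕ Fin n) ℂ with gᴴ 𝕁 g = 𝕁 and det g = 1 such that the image of V under the linear map x ↦ g *ᵥ x equals V'. -/

import Mathlib

open Matrix

noncomputable section

abbrev Idx (n : ℕ) := Fin n ⊕ Fin 1 ⊕ Fin n

def Jmat (n : ℕ) : Matrix (Idx n) (Idx n) ℂ :=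
  Matrix.of fun i j =>
    match i, j with
    | Sum.inl a, Sum.inr (Sum.inr b) => if a = b then 1 else 0
    | Sum.inr (Sum.inr a), Sum.inl b => if a = b then 1 else 0
    | Sum.inr (Sum.inl _), Sum.inr (Sum.inl _) => 1
    | _, _ => 0

def hform {n : ℕ} (x y : Idx n → ℂ) : ℂ := star x ⬝ᵥ (Jmat n *ᵥ y)

def IsIsotropic {n : ℕ} (V : Submodule ℂ (Idx n → ℂ)) : Prop :=
  ∀ x ∈ V, ∀ y ∈ V, hform x y = 0

variable {n : ℕ}

lemma Jmat_conjTranspose : (Jmat n)ᴴ = Jmat n := by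
  ext i j
  rcases i with a | a | a <;> rcases j with b | b | b <;>
    simp [Jmat, conjTranspose_apply, eq_comm] <;> split <;> simp

lemma Jmat_mul_Jmat : Jmat n * Jmat n = 1 := by
  ext i j
  rcases i with a | a | a <;> rcases j with b | b | b <;>
    simp [Jmat, Matrix.mul_apply, Matrix.one_apply, Fintype.sum_sum_type,
      Fin.sum_univ_one]
  rw [Subsingleton.elim a b]

lemma hform_add_right (x y z : Idx n → ℂ) : hform x (y + z) = hform x y + hform x z := by
  simp [hform, Matrix.mulVec_add, dotProduct_add]

lemma hform_smul_right (c : ℂ) (x y : Idx n → ℂ) : hform x (c • y) = c * hform x y := by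
  simp [hform, Matrix.mulVec_smul, dotProduct_smul, smul_eq_mul]

lemma hform_add_left (x y z : Idx n → ℂ) : hform (x + y) z = hform x z + hform y z := by
  simp [hform, star_add, add_dotProduct]

lemma hform_smul_left (c : ℂ) (x y : Idx n → ℂ) :
    hform (c • x) y = (starRingEnd ℂ) c * hform x y := by
  rw [hform, hform, star_smul, smul_dotProduct, starRingEnd_apply]
  rfl

lemma hform_conj (x y : Idx n → ℂ) : (starRingEnd ℂ) (hform x y) = hform y x := by
  rw [hform, hform, starRingEnd_apply, star_dotProduct, star_star, star_mulVec,
    Jmat_conjTranspose, dotProduct_mulVec]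

lemma hform_sum_right {ι : Type*} (s : Finset ι) (x : Idx n → ℂ) (f : ι → Idx n → ℂ) :
    hform x (∑ i ∈ s, f i) = ∑ i ∈ s, hform x (f i) := by
  classical
  induction s using Finset.induction_on with
  | empty => simp [hform]
  | @insert a s ha ih => simp [Finset.sum_insert ha, hform_add_right, ih]

lemma hform_sum_left {ι : Type*} (s : Finset ι) (f : ι → Idx n → ℂ) (y : Idx n → ℂ) :
    hform (∑ i ∈ s, f i) y = ∑ i ∈ s, hform (f i) y := by
  classical
  induction s using Finset.induction_on with
  | empty => simp [hform]
  | @insert a s ha ih => simp [Finset.sum_insert ha, hform_add_left, ih]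

lemma hform_single_left (k : Idx n) (y : Idx n → ℂ) :
    hform (Pi.single k 1) y = (Jmat n *ᵥ y) k := by
  have : star (Pi.single k 1 : Idx n → ℂ) = Pi.single k 1 := by
    ext j
    by_cases h : j = k
    · subst h; simp
    · simp [Pi.single_eq_of_ne h]
  rw [hform, this, single_dotProduct, one_mul]

lemma hform_nondeg_right {y : Idx n → ℂ} (h : ∀ x, hform x y = 0) : y = 0 := by
  have hJ : Jmat n *ᵥ y = 0 := by
    ext k; simpa [hform_single_left] using h (Pi.single k 1)
  have := congrArg (fun z => Jmat n *ᵥ z) hJ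
  simpa [Matrix.mulVec_mulVec, Jmat_mul_Jmat] using this

/-- The pairing map `y ↦ (i ↦ hform (v i) y)`. -/
def Lmap {ι : Type*} [Fintype ι] (v : ι → Idx n → ℂ) : (Idx n → ℂ) →ₗ[ℂ] (ι → ℂ) where
  toFun y := fun i => hform (v i) y
  map_add' y z := by ext i; simp [hform_add_right]
  map_smul' c y := by ext i; simp [hform_smul_right]

lemma Lmap_surjective (v : Fin n → Idx n → ℂ) (hv : LinearIndependent ℂ v) :
    Function.Surjective (Lmap v) := by
  rw [← LinearMap.range_eq_top]
  by_contra hne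
  obtain ⟨φ, hφ0, hφ⟩ := Submodule.exists_dual_map_eq_bot_of_lt_top
    (lt_top_iff_ne_top.mpr hne) inferInstance
  have hdec : ∀ w : Fin n → ℂ, φ w = ∑ i, w i * φ (Pi.single i 1) := by
    intro w
    conv_lhs => rw [← Finset.univ_sum_single w]
    rw [map_sum]
    refine Finset.sum_congr rfl fun i _ => ?_
    have : (Pi.single i (w i) : Fin n → ℂ) = w i • (Pi.single i 1 : Fin n → ℂ) := by
      ext j; by_cases h : j = i
      · subst h; simp
      · simp [Pi.single_eq_of_ne h]
    rw [this, _root_.map_smul, smul_eq_mul]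
  set x : Idx n → ℂ := ∑ i, (starRingEnd ℂ) (φ (Pi.single i 1)) • v i with hx
  have hφr : ∀ w ∈ LinearMap.range (Lmap v), φ w = 0 := by
    intro w hw
    have : φ w ∈ (⊥ : Submodule ℂ ℂ) := by
      rw [← hφ]; exact Submodule.mem_map_of_mem hw
    simpa using this
  have hxz : x = 0 := by
    apply hform_nondeg_right (y := x)
    intro z
    have h1 : hform x z = φ (Lmap v z) := by
      rw [hx, hform_sum_left, hdec (Lmap v z)]
      refine Finset.sum_congr rfl fun i _ => ?_
      rw [hform_smul_left]
      simp only [Complex.conj_conj]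
      exact mul_comm _ _
    have h2 : hform z x = (starRingEnd ℂ) (hform x z) := (hform_conj x z).symm
    rw [h2, h1, hφr _ (LinearMap.mem_range_self _ z), map_zero]
  have hcoef : ∀ i, (starRingEnd ℂ) (φ (Pi.single i 1)) = 0 :=
    Fintype.linearIndependent_iff.mp hv _ hxz
  refine hφ0 ?_
  apply LinearMap.ext
  intro w
  rw [hdec w]
  simp only [LinearMap.zero_apply]
  refine Finset.sum_eq_zero fun i _ => ?_
  have : φ (Pi.single i 1) = 0 := by
    have := hcoef i
    rwa [map_eq_zero_iff _ (starRingEnd ℂ).injective] at this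
  rw [this, mul_zero]

lemma hform_zero_right (x : Idx n → ℂ) : hform x 0 = 0 := by simp [hform]

def stdIso (n : ℕ) : Submodule ℂ (Idx n → ℂ) :=
  Submodule.span ℂ (Set.range fun i : Fin n => Pi.single (Sum.inl i) (1 : ℂ))

lemma gram_apply (f : Idx n → Idx n → ℂ) (i j : Idx n) :
    ((Matrix.of fun k i => f i k)ᴴ * Jmat n * (Matrix.of fun k i => f i k)) i j
      = hform (f i) (f j) := by
  rw [Matrix.mul_assoc]
  simp [Matrix.mul_apply, hform, dotProduct, Matrix.mulVec, conjTranspose_apply,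
    Finset.mul_sum]

lemma exists_std_to (V : Submodule ℂ (Idx n → ℂ)) (hVrk : Module.finrank ℂ V = n)
    (hV : IsIsotropic V) :
    ∃ g : Matrix (Idx n) (Idx n) ℂ, gᴴ * Jmat n * g = Jmat n ∧
      (stdIso n).map (Matrix.mulVecLin g) = V := by
  classical
  -- basis of V
  let b : Module.Basis (Fin n) ℂ V := Module.finBasisOfFinrankEq ℂ V hVrk
  set v : Fin n → Idx n → ℂ := fun i => (b i : Idx n → ℂ) with hvdef
  have hvind : LinearIndependent ℂ v := b.linearIndependent.map' V.subtype V.ker_subtype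
  have hvmem : ∀ i, v i ∈ V := fun i => (b i).2
  have hspan : Submodule.span ℂ (Set.range v) = V := by
    have : Set.range v = V.subtype '' Set.range b := by
      rw [← Set.range_comp]; rfl
    rw [this, Submodule.span_image, b.span_eq, Submodule.map_top, Submodule.range_subtype]
  have hvv : ∀ i j, hform (v i) (v j) = 0 := fun i j => hV _ (hvmem i) _ (hvmem j)
  -- dual family w'
  have hsurj := Lmap_surjective v hvind
  choose w' hw' using fun j => hsurj (Pi.single j 1)
  have hvw' : ∀ i j, hform (v i) (w' j) = if i = j then 1 else 0 := by
    intro i j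
    have := congrFun (hw' j) i
    simpa [Lmap, Pi.single_apply] using this
  -- correction to make w totally isotropic
  set A : Fin n → Fin n → ℂ := fun i j => hform (w' i) (w' j) with hAdef
  have hAconj : ∀ i j, (starRingEnd ℂ) (A j i) = A i j := fun i j => hform_conj _ _
  set w : Fin n → Idx n → ℂ := fun j => w' j + ∑ k, (-(A k j)/2) • v k with hwdef
  have hw'v : ∀ i k, hform (w' i) (v k) = if k = i then 1 else 0 := by
    intro i k
    rw [← hform_conj (v k) (w' i), hvw' k i]
    split <;> simp
  have hvw : ∀ i j, hform (v i) (w j) = if i = j then 1 else 0 := by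
    intro i j
    rw [show w j = w' j + ∑ k, (-(A k j)/2) • v k from rfl, hform_add_right, hform_sum_right]
    simp [hform_smul_right, hvv, hvw' i j]
  have hwv : ∀ i j, hform (w i) (v j) = if j = i then 1 else 0 := by
    intro i j
    rw [← hform_conj (v j) (w i), hvw j i]
    split <;> simp
  have hww : ∀ i j, hform (w i) (w j) = 0 := by
    intro i j
    have t2 : hform (w' i) (∑ k, (-(A k j)/2) • v k) = -(A i j)/2 := by
      rw [hform_sum_right]
      simp [hform_smul_right, hw'v, mul_ite, Finset.sum_ite_eq]
    have t3 : hform (∑ k, (-(A k i)/2) • v k) (w' j) = -(A i j)/2 := by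
      rw [hform_sum_left]
      simp only [hform_smul_left]
      have : ∀ k, (starRingEnd ℂ) (-(A k i)/2) * hform (v k) (w' j)
          = if k = j then -(A i j)/2 else 0 := by
        intro k
        rcases eq_or_ne k j with h | h
        · subst h
          rw [hvw' k k, if_pos rfl, if_pos rfl, mul_one, map_div₀, map_neg, hAconj]
          norm_num [map_ofNat]
        · rw [hvw' k j, if_neg h, if_neg h, mul_zero]
      rw [Finset.sum_congr rfl fun k _ => this k]
      simp
    have t4 : hform (∑ k, (-(A k i)/2) • v k) (∑ k, (-(A k j)/2) • v k) = 0 := by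
      rw [hform_sum_left]
      refine Finset.sum_eq_zero fun k _ => ?_
      rw [hform_smul_left, hform_sum_right]
      simp [hform_smul_right, hvv]
    rw [show w i = w' i + ∑ k, (-(A k i)/2) • v k from rfl,
        show w j = w' j + ∑ k, (-(A k j)/2) • v k from rfl,
        hform_add_left, hform_add_right, hform_add_right, t2, t3, t4]
    have : hform (w' i) (w' j) = A i j := rfl
    rw [this]
    ring
  -- the orthogonal complement vector
  set L2 := Lmap (Sum.elim v w) with hL2def
  have hkerne : LinearMap.ker L2 ≠ ⊥ := by
    intro hbot
    have h1 := LinearMap.finrank_range_add_finrank_ker L2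
    rw [hbot, finrank_bot, add_zero] at h1
    have h2 : Module.finrank ℂ (LinearMap.range L2) ≤
        Module.finrank ℂ (Fin n ⊕ Fin n → ℂ) := Submodule.finrank_le _
    rw [h1] at h2
    simp only [Module.finrank_pi] at h2
    simp only [Fintype.card_sum, Fintype.card_fin] at h2
    omega
  obtain ⟨u₀, hu₀ker, hu₀ne⟩ := Submodule.exists_mem_ne_zero_of_ne_bot hkerne
  have hu₀ker' : L2 u₀ = 0 := hu₀ker
  have hvu : ∀ i, hform (v i) u₀ = 0 := fun i => congrFun hu₀ker' (Sum.inl i)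
  have hwu : ∀ j, hform (w j) u₀ = 0 := fun j => congrFun hu₀ker' (Sum.inr j)
  have huv : ∀ i, hform u₀ (v i) = 0 := by
    intro i; rw [← hform_conj, hvu, map_zero]
  have huw : ∀ j, hform u₀ (w j) = 0 := by
    intro j; rw [← hform_conj, hwu, map_zero]
  -- the full family
  set f₀ : Idx n → Idx n → ℂ := Sum.elim v (Sum.elim (fun _ => u₀) w) with hf₀def
  have hind : LinearIndependent ℂ f₀ := by
    rw [Fintype.linearIndependent_iff]
    intro c hc
    have hcl : ∀ j, c (Sum.inl j) = 0 := by
      intro j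
      have h0 := congrArg (hform (w j)) hc
      rw [hform_zero_right, hform_sum_right] at h0
      rw [Fintype.sum_sum_type, Fintype.sum_sum_type] at h0
      simpa [hf₀def, hform_smul_right, hwv, hww, hwu, mul_ite, Finset.sum_ite_eq',
        Finset.sum_ite_eq] using h0
    have hcr : ∀ j, c (Sum.inr (Sum.inr j)) = 0 := by
      intro j
      have h0 := congrArg (hform (v j)) hc
      rw [hform_zero_right, hform_sum_right] at h0
      rw [Fintype.sum_sum_type, Fintype.sum_sum_type] at h0
      simpa [hf₀def, hform_smul_right, hvw, hvv, hvu, mul_ite, Finset.sum_ite_eq',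
        Finset.sum_ite_eq] using h0
    have hcm : ∀ t, c (Sum.inr (Sum.inl t)) = 0 := by
      intro t
      have h1 := hc
      rw [Fintype.sum_sum_type, Fintype.sum_sum_type] at h1
      simp only [hcl, hcr, zero_smul, Finset.sum_const_zero, zero_add, add_zero] at h1
      rw [Fin.sum_univ_one] at h1
      have := (smul_eq_zero.mp h1).resolve_right hu₀ne
      rw [Subsingleton.elim t 0]
      simpa using this
    intro k
    rcases k with i | t | i
    · exact hcl i
    · exact hcm t
    · exact hcr i
  -- the preliminary matrix
  set g₀ : Matrix (Idx n) (Idx n) ℂ := Matrix.of (fun k i => f₀ i k) with hg₀def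
  set dr : Idx n → ℂ :=
    Sum.elim (fun _ => 1) (Sum.elim (fun _ => hform u₀ u₀) (fun _ => 1)) with hdrdef
  have hGram0 : g₀ᴴ * Jmat n * g₀ = Jmat n * Matrix.diagonal dr := by
    ext i j
    rw [hg₀def, _root_.gram_apply f₀ i j, Matrix.mul_diagonal]
    rcases i with a | t | a <;> rcases j with b | s | b <;>
      simp [hf₀def, hdrdef, Jmat, hvv, hvw, hwv, hww, hvu, hwu, huv, huw, eq_comm]
  have hg₀unit : IsUnit g₀ := by
    apply Matrix.mulVec_injective_iff_isUnit.mp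
    apply Matrix.mulVec_injective_iff.mpr
    exact hind
  have hg₀det : g₀.det ≠ 0 := by
    have := (Matrix.isUnit_iff_isUnit_det _).mp hg₀unit
    exact isUnit_iff_ne_zero.mp this
  have hJdet : (Jmat n).det * (Jmat n).det = 1 := by
    rw [← Matrix.det_mul, Jmat_mul_Jmat, Matrix.det_one]
  have hJdet_ne : (Jmat n).det ≠ 0 := by
    intro h; rw [h, mul_zero] at hJdet; exact zero_ne_one hJdet
  -- determinant identity gives positivity of hform u₀ u₀
  have hdet := congrArg Matrix.det hGram0
  rw [Matrix.det_mul, Matrix.det_mul, Matrix.det_conjTranspose, Matrix.det_mul,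
    Matrix.det_diagonal] at hdet
  have hprod : ∏ k, dr k = hform u₀ u₀ := by
    rw [Fintype.prod_sum_type, Fintype.prod_sum_type]
    simp [hdrdef]
  rw [hprod] at hdet
  have hr : (Jmat n).det * (star g₀.det * g₀.det) = (Jmat n).det * hform u₀ u₀ := by
    linear_combination hdet
  have hr2 : hform u₀ u₀ = star g₀.det * g₀.det := (mul_left_cancel₀ hJdet_ne hr).symm
  set ρ : ℝ := ‖g₀.det‖ with hρdef
  have hρpos : 0 < ρ := norm_pos_iff.mpr hg₀det
  have huu0 : hform u₀ u₀ = ((ρ ^ 2 : ℝ) : ℂ) := by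
    rw [hr2, mul_comm, Complex.star_def, Complex.mul_conj, hρdef, Complex.sq_norm]
  -- scale u₀
  set s : ℂ := ((ρ⁻¹ : ℝ) : ℂ) with hsdef
  set u : Idx n → ℂ := s • u₀ with hudef
  have huu : hform u u = 1 := by
    rw [hudef, hform_smul_left, hform_smul_right, huu0, hsdef, Complex.conj_ofReal]
    norm_cast
    field_simp
  have hvu2 : ∀ i, hform (v i) u = 0 := by
    intro i; rw [hudef, hform_smul_right, hvu, mul_zero]
  have hwu2 : ∀ j, hform (w j) u = 0 := by
    intro j; rw [hudef, hform_smul_right, hwu, mul_zero]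
  have huv2 : ∀ i, hform u (v i) = 0 := by
    intro i; rw [hudef, hform_smul_left, huv, mul_zero]
  have huw2 : ∀ j, hform u (w j) = 0 := by
    intro j; rw [hudef, hform_smul_left, huw, mul_zero]
  -- the final matrix
  set f : Idx n → Idx n → ℂ := Sum.elim v (Sum.elim (fun _ => u) w) with hfdef
  set g : Matrix (Idx n) (Idx n) ℂ := Matrix.of (fun k i => f i k) with hgdef
  refine ⟨g, ?_, ?_⟩
  · ext i j
    rw [hgdef, _root_.gram_apply f i j]
    rcases i with a | t | a <;> rcases j with b | s' | b <;>
      simp [hfdef, Jmat, hvv, hvw, hwv, hww, hvu2, hwu2, huv2, huw2, huu, eq_comm]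
  · have hcol : ∀ i : Fin n,
        Matrix.mulVecLin g (Pi.single (Sum.inl i) (1 : ℂ)) = v i := by
      intro i
      rw [Matrix.mulVecLin_apply, Matrix.mulVec_single_one]
      rfl
    rw [stdIso, Submodule.map_span, ← Set.range_comp]
    have : (Matrix.mulVecLin g ∘ fun i : Fin n => Pi.single (Sum.inl i) (1 : ℂ)) = v :=
      funext hcol
    rw [this, hspan]

lemma grp_mul {a b : Matrix (Idx n) (Idx n) ℂ}
    (ha : aᴴ * Jmat n * a = Jmat n) (hb : bᴴ * Jmat n * b = Jmat n) :
    (a * b)ᴴ * Jmat n * (a * b) = Jmat n := by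
  rw [Matrix.conjTranspose_mul]
  have key : aᴴ * (Jmat n * (a * b)) = Jmat n * b := by
    calc aᴴ * (Jmat n * (a * b)) = aᴴ * Jmat n * a * b := by
          simp only [Matrix.mul_assoc]
      _ = Jmat n * b := by rw [ha]
  calc bᴴ * aᴴ * Jmat n * (a * b) = bᴴ * (aᴴ * (Jmat n * (a * b))) := by
        simp only [Matrix.mul_assoc]
    _ = bᴴ * (Jmat n * b) := by rw [key]
    _ = Jmat n := by rw [← Matrix.mul_assoc, hb]

lemma grp_det {g : Matrix (Idx n) (Idx n) ℂ} (hg : gᴴ * Jmat n * g = Jmat n) :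
    star g.det * g.det = 1 := by
  have hJdet : (Jmat n).det * (Jmat n).det = 1 := by
    rw [← Matrix.det_mul, Jmat_mul_Jmat, Matrix.det_one]
  have hJdet_ne : (Jmat n).det ≠ 0 := by
    intro h; rw [h, mul_zero] at hJdet; exact zero_ne_one hJdet
  have hdet := congrArg Matrix.det hg
  rw [Matrix.det_mul, Matrix.det_mul, Matrix.det_conjTranspose] at hdet
  have : (Jmat n).det * (star g.det * g.det) = (Jmat n).det * 1 := by
    linear_combination hdet
  exact mul_left_cancel₀ hJdet_ne this

theorem su_transitive_on_isotropic (n : ℕ) (hn : 1 ≤ n)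
    (V V' : Submodule ℂ (Idx n → ℂ))
    (hVrk : Module.finrank ℂ V = n) (hV'rk : Module.finrank ℂ V' = n)
    (hV : IsIsotropic V) (hV' : IsIsotropic V') :
    ∃ g : Matrix (Idx n) (Idx n) ℂ,
      gᴴ * Jmat n * g = Jmat n ∧ g.det = 1 ∧
      V.map (Matrix.mulVecLin g) = V' := by
  classical
  obtain ⟨g1, hg1, hmap1⟩ := exists_std_to V hVrk hV
  obtain ⟨g2, hg2, hmap2⟩ := exists_std_to V' hV'rk hV'
  have hd1 := grp_det hg1
  have hd2 := grp_det hg2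
  have hd1ne : g1.det ≠ 0 := by
    intro h; rw [h, mul_zero] at hd1; exact zero_ne_one hd1
  have hd2ne : g2.det ≠ 0 := by
    intro h; rw [h, mul_zero] at hd2; exact zero_ne_one hd2
  have hd1unit : IsUnit g1.det := isUnit_iff_ne_zero.mpr hd1ne
  set bb : ℂ := g1.det * star g2.det with hbbdef
  have hbb : star bb * bb = 1 := by
    have : star bb * bb = (star g1.det * g1.det) * (star g2.det * g2.det) := by
      rw [hbbdef]; simp only [star_mul', star_star]; ring
    rw [this, hd1, hd2, one_mul]
  have hbb2 : bb * (starRingEnd ℂ) bb = 1 := by rw [mul_comm]; exact hbb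
  set dD : Idx n → ℂ := Sum.elim (fun _ => 1) (Sum.elim (fun _ => bb) (fun _ => 1))
    with hdDdef
  set D : Matrix (Idx n) (Idx n) ℂ := Matrix.diagonal dD with hDdef
  have hD : Dᴴ * Jmat n * D = Jmat n := by
    rw [hDdef, Matrix.diagonal_conjTranspose]
    ext i j
    rw [Matrix.mul_diagonal, Matrix.diagonal_mul]
    rcases i with a | t | a <;> rcases j with b | s | b <;>
      simp [Jmat, hdDdef, hbb, hbb2, mul_comm]
  have hdetD : D.det = bb := by
    rw [hDdef, Matrix.det_diagonal, Fintype.prod_sum_type, Fintype.prod_sum_type]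
    simp [hdDdef]
  have hmapD : (stdIso n).map (Matrix.mulVecLin D) = stdIso n := by
    rw [stdIso, Submodule.map_span, ← Set.range_comp]
    have : (Matrix.mulVecLin D ∘ fun i : Fin n => Pi.single (Sum.inl i) (1 : ℂ))
        = fun i : Fin n => Pi.single (Sum.inl i) (1 : ℂ) := by
      funext i
      rw [Function.comp_apply, Matrix.mulVecLin_apply, hDdef,
        Matrix.diagonal_mulVec_single]
      rw [hdDdef]
      simp
    rw [this]
  have hinv1 : g1⁻¹ * g1 = 1 := Matrix.nonsing_inv_mul g1 hd1unit
  have hinv1' : g1 * g1⁻¹ = 1 := Matrix.mul_nonsing_inv g1 hd1unit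
  have hg1inv : (g1⁻¹)ᴴ * Jmat n * g1⁻¹ = Jmat n := by
    calc (g1⁻¹)ᴴ * Jmat n * g1⁻¹ = (g1⁻¹)ᴴ * (g1ᴴ * Jmat n * g1) * g1⁻¹ := by rw [hg1]
      _ = (g1 * g1⁻¹)ᴴ * Jmat n * (g1 * g1⁻¹) := by
          rw [Matrix.conjTranspose_mul]; simp only [Matrix.mul_assoc]
      _ = Jmat n := by rw [hinv1', Matrix.conjTranspose_one, one_mul, mul_one]
  refine ⟨g2 * D * g1⁻¹, grp_mul (grp_mul hg2 hD) hg1inv, ?_, ?_⟩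
  · rw [Matrix.det_mul, Matrix.det_mul, hdetD, Matrix.det_nonsing_inv]
    rw [hbbdef, Ring.inverse_eq_inv']
    have hd2' : (starRingEnd ℂ) g2.det * g2.det = 1 := hd2
    simp only [Complex.star_def]
    field_simp
    linear_combination hd2'
  · rw [Matrix.mulVecLin_mul, Matrix.mulVecLin_mul, Submodule.map_comp,
      Submodule.map_comp]
    have h1 : V.map (Matrix.mulVecLin g1⁻¹) = stdIso n := by
      rw [← hmap1, ← Submodule.map_comp, ← Matrix.mulVecLin_mul, hinv1,
        Matrix.mulVecLin_one, Submodule.map_id]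
    rw [h1, hmapD, hmap2]

end
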